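/- Corollary: Let f be a BN and x̂ → ŷ an MP step with Δ(x̂,ŷ) = {i} and x̂_i Boolean (so ŷ_i is transient). Then there is a transition t ∈ T_i such that the 0.5-firing of t from ⟨x̂⟩ leads exactly to ⟨ŷ⟩. -/
import Mathlib


open Relation Filter

/-! ### Boolean networks and their semantics -/

abbrev Config (n : ℕ) := Fin n → Bool
abbrev BN (n : ℕ) := Config n → Fin n → Bool

def Delta {n : ℕ} (x y : Config n) : Set (Fin n) := {i | x i ≠ y i}

def fa {n : ℕ} (f : BN n) (x y : Config n) : Prop :=
  ∃ i, Delta x y = {i} ∧ f x i = y i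

def syn {n : ℕ} (f : BN n) (x y : Config n) : Prop := ∀ i, f x i = y i

def ga {n : ℕ} (f : BN n) (x y : Config n) : Prop := ∀ i ∈ Delta x y, f x i = y i

/-! ### Most permissive semantics -/

inductive MPV where
  | b : Bool → MPV
  | up : MPV
  | down : MPV
deriving DecidableEq

abbrev MPConfig (n : ℕ) := Fin n → MPV

def toMP {n : ℕ} (x : Config n) : MPConfig n := fun i => .b (x i)

def beta {n : ℕ} (xh : MPConfig n) : Set (Config n) :=
  {x | ∀ i v, xh i = .b v → x i = v}

def mpStep {n : ℕ} (f : BN n) (xh yh : MPConfig n) : Prop :=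
  ∃ i, (∀ j, j ≠ i → xh j = yh j) ∧ xh i ≠ yh i ∧
    ((xh i = .up ∧ yh i = .b true) ∨
     (xh i = .down ∧ yh i = .b false) ∨
     (xh i ≠ .b true ∧ yh i = .up ∧ ∃ x ∈ beta xh, f x i = true) ∨
     (xh i ≠ .b false ∧ yh i = .down ∧ ∃ x ∈ beta xh, f x i = false))

def mp {n : ℕ} (f : BN n) (x y : Config n) : Prop :=
  ReflTransGen (mpStep f) (toMP x) (toMP y)

/-! ### Petri nets (discrete and continuous) -/

structure Net (P T : Type) where
  wPT : P → T → ℕ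
  wTP : T → P → ℕ

def dfire {P T : Type} (N : Net P T) (t : T) (M M' : P → ℕ) : Prop :=
  (∀ p, N.wPT p t ≤ M p) ∧ ∀ p, M' p = M p - N.wPT p t + N.wTP t p

def dReach {P T : Type} (N : Net P T) : (P → ℕ) → (P → ℕ) → Prop :=
  ReflTransGen (fun M M' => ∃ t, dfire N t M M')

def cfire {P T : Type} (N : Net P T) (t : T) (α : ℝ) (m m' : P → ℝ) : Prop :=
  0 ≤ α ∧ (∀ p, α * N.wPT p t ≤ m p) ∧
    ∀ p, m' p = m p - α * N.wPT p t + α * N.wTP t p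

def cReach {P T : Type} (N : Net P T) : (P → ℝ) → (P → ℝ) → Prop :=
  ReflTransGen (fun m m' => ∃ t α, cfire N t α m m')

def limReach {P T : Type} (N : Net P T) (m m' : P → ℝ) : Prop :=
  ∃ ms : ℕ → P → ℝ, ms 0 = m ∧
    (∀ k, ∃ t α, cfire N t α (ms k) (ms (k+1))) ∧
    Tendsto ms atTop (nhds m')

def IsTrap {P T : Type} (N : Net P T) (S : Set P) : Prop :=
  ∀ t, (∃ p ∈ S, 0 < N.wPT p t) → ∃ p ∈ S, 0 < N.wTP t p

def enabPos {P T : Type} (N : Net P T) (t : T) (m : P → ℝ) : Prop :=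
  ∀ p, 0 < N.wPT p t → 0 < m p

def enabGe {P T : Type} (N : Net P T) (t : T) (m : P → ℝ) (c : ℝ) : Prop :=
  ∀ p, 0 < N.wPT p t → c * N.wPT p t ≤ m p

/-! ### Petri net encoding of Boolean networks -/

abbrev Clause (n : ℕ) := Fin n → Option Bool

def satC {n : ℕ} (z : Config n) (C : Clause n) : Prop :=
  ∀ j v, C j = some v → z j = v

structure ETrans (n : ℕ) where
  i : Fin n
  s : Bool
  C : Clause n

abbrev EPlace (n : ℕ) := Fin n × Bool

def encNet (n : ℕ) : Net (EPlace n) (ETrans n) where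
  wPT := fun p t =>
    if p.1 = t.i then (if p.2 = !t.s then 1 else 0)
    else (if t.C p.1 = some p.2 then 1 else 0)
  wTP := fun t p =>
    if p.1 = t.i then (if p.2 = t.s then 1 else 0)
    else (if t.C p.1 = some p.2 then 1 else 0)

def mu {n : ℕ} (xh : MPConfig n) : Set (EPlace n → ℝ) :=
  {m | (∀ p, 0 ≤ m p) ∧ ∀ i,
    m (i, false) + m (i, true) = 1 ∧
    (∀ v, xh i = .b v → m (i, v) = 1) ∧
    ((xh i = .up ∨ xh i = .down) →
      0 < m (i, false) ∧ m (i, false) < 1 ∧ 0 < m (i, true) ∧ m (i, true) < 1)}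

noncomputable def canon {n : ℕ} (xh : MPConfig n) : EPlace n → ℝ := fun p =>
  match xh p.1 with
  | .b v => if p.2 = v then 1 else 0
  | _ => 1/2

def validT {n : ℕ} (D : Fin n → Bool → Set (Clause n)) (t : ETrans n) : Prop :=
  t.C ∈ D t.i t.s

def IsDNF {n : ℕ} (f : BN n) (D : Fin n → Bool → Set (Clause n)) : Prop :=
  (∀ i s z, (∃ C ∈ D i s, satC z C) ↔ (z i = !s ∧ f z i = s)) ∧
  (∀ i s C, C ∈ D i s → C i = some (!s))

def cReachG {P T : Type} (N : Net P T) (good : T → Prop) :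
    (P → ℝ) → (P → ℝ) → Prop :=
  ReflTransGen (fun m m' => ∃ t, good t ∧ ∃ α, cfire N t α m m')

def climReachG {P T : Type} (N : Net P T) (good : T → Prop) (m m' : P → ℝ) : Prop :=
  ∃ ms : ℕ → P → ℝ, ms 0 = m ∧
    (∀ k, ∃ t, good t ∧ ∃ α, cfire N t α (ms k) (ms (k+1))) ∧
    Tendsto ms atTop (nhds m')


lemma half_fire_helper {n : ℕ} (xh yh : MPConfig n) (i : Fin n) (s : Bool)
    (hx : xh i = MPV.b (!s)) (hy : yh i = MPV.up ∨ yh i = MPV.down)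
    (hdiff : ∀ j, j ≠ i → xh j = yh j)
    (C : Clause n) (x : Config n) (hxb : x ∈ beta xh) (hsat : satC x C) :
    cfire (encNet n) ⟨i, s, C⟩ (1/2) (canon xh) (canon yh) := by
  have hcx : ∀ b : Bool, canon xh (i, b) = if b = !s then 1 else 0 := by
    intro b; simp [canon, hx]
  have hcy : ∀ b : Bool, canon yh (i, b) = 1/2 := by
    intro b; rcases hy with h | h <;> simp [canon, h]
  have hother : ∀ j : Fin n, j ≠ i → ∀ b, canon yh (j, b) = canon xh (j, b) := by
    intro j hj b; simp only [canon, hdiff j hj]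
  have hlow : ∀ (j : Fin n) (b : Bool), C j = some b → (1:ℝ)/2 ≤ canon xh (j, b) := by
    intro j b hCj
    have hxj : x j = b := hsat j b hCj
    rcases h : xh j with w | _ | _
    · have : x j = w := hxb j w h
      simp [canon, h, ← hxj, this]
      norm_num
    · simp [canon, h]
    · simp [canon, h]
  refine ⟨by norm_num, ?_, ?_⟩
  · rintro ⟨j, b⟩
    by_cases hj : j = i
    · subst hj
      rcases b <;> rcases s <;> simp_all [encNet, hcx] <;> norm_num
    · simp only [encNet, hj, if_neg hj]
      by_cases hC : C j = some b
      · have := hlow j b hC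
        simp [hC]; linarith
      · rcases h : xh j with w | _ | _ <;> simp [canon, h, hC] <;> positivity
  · rintro ⟨j, b⟩
    by_cases hj : j = i
    · subst hj
      rw [hcx, hcy]
      rcases b <;> rcases s <;> simp [encNet] <;> norm_num
    · rw [hother j hj]
      simp only [encNet, if_neg hj]
      ring

/-- corollary: for an MP step changing exactly variable i
from a Boolean value to a transient value, some transition t ∈ T_i of the
encoding 0.5-fires from ⟨x̂⟩ exactly to ⟨ŷ⟩. -/
theorem boolean_to_transient_half_firing {n : ℕ} (f : BN n)
    (D : Fin n → Bool → Set (Clause n)) (hD : IsDNF f D)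
    (xh yh : MPConfig n) (i : Fin n)
    (hstep : mpStep f xh yh)
    (hdiff : ∀ j, j ≠ i → xh j = yh j) (hne : xh i ≠ yh i)
    (hbool : ∃ v, xh i = MPV.b v) :
    ∃ t : ETrans n, t.i = i ∧ validT D t ∧
      cfire (encNet n) t (1/2) (canon xh) (canon yh) := by
  obtain ⟨v, hv⟩ := hbool
  obtain ⟨i', hdiff', hne', hcase⟩ := hstep
  have hii : i' = i := by
    by_contra h
    exact hne' (hdiff i' h)
  subst i'
  rcases hcase with ⟨h1, _⟩ | ⟨h1, _⟩ | ⟨hnt, hup, x, hxb, hfx⟩ | ⟨hnf, hdn, x, hxb, hfx⟩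
  · rw [hv] at h1; exact absurd h1 (by simp)
  · rw [hv] at h1; exact absurd h1 (by simp)
  · -- yh i = up, so v = false, s = true
    have hvfalse : v = false := by
      rcases v with _ | _
      · rfl
      · exact absurd hv hnt
    subst hvfalse
    have hxi : x i = false := hxb i false hv
    obtain ⟨C, hC, hsat⟩ := (hD.1 i true x).2 ⟨by simpa using hxi, hfx⟩
    exact ⟨⟨i, true, C⟩, rfl, hC,
      half_fire_helper xh yh i true (by simpa using hv) (Or.inl hup) hdiff C x hxb hsat⟩
  · have hvtrue : v = true := by
      rcases v with _ | _
      · exact absurd hv hnf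
      · rfl
    subst hvtrue
    have hxi : x i = true := hxb i true hv
    obtain ⟨C, hC, hsat⟩ := (hD.1 i false x).2 ⟨by simpa using hxi, hfx⟩
    exact ⟨⟨i, false, C⟩, rfl, hC,
      half_fire_helper xh yh i false (by simpa using hv) (Or.inr hdn) hdiff C x hxb hsat⟩
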